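/- Let X be a subshift over a finite alphabet A, let n ≥ 1, and set N = ⌊(n−1)/2⌋. Suppose φ₁ and φ₂ are automorphisms of X of range N, with inducing block maps Φ₁, Φ₂ : A^{2N+1} → A respectively, both φ₁ and φ₂ fix every isolated periodic point of X, and Φ₁(w) = Φ₂(w) for every n-branch word w of X. Then φ₁ = φ₂. -/

import Mathlib

open Filter Topology

/-- The left shift on bi-infinite sequences, as a bijection. -/
def shiftPerm (A : Type) : Equiv.Perm (ℤ → A) where
  toFun x n := x (n + 1)
  invFun x n := x (n - 1)
  left_inv x := funext fun n => by simp
  right_inv x := funext fun n => by simp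

/-- A subshift: a closed, shift-invariant subset of the full shift. -/
def IsSubshift {A : Type} [TopologicalSpace A] (X : Set (ℤ → A)) : Prop :=
  IsClosed X ∧ (shiftPerm A) '' X = X

/-- The word `w` occurs in some point of `X`. -/
def WordIn {A : Type} (X : Set (ℤ → A)) (w : List A) : Prop :=
  ∃ x ∈ X, ∃ i : ℤ, ∀ j : Fin w.length, x (i + ((j : ℕ) : ℤ)) = w.get j

/-- The language of `X`. -/
def language {A : Type} (X : Set (ℤ → A)) : Set (List A) :=
  {w | WordIn X w}

/-- The word complexity function `c_n(X)`: the number of `n`-letter words of `X`. -/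
noncomputable def complexity {A : Type} (X : Set (ℤ → A)) (n : ℕ) : ℕ :=
  Nat.card {w : List A // w.length = n ∧ w ∈ language X}

/-- `w` is a right-special word of length `n` for `X`. -/
def RightSpecial {A : Type} (X : Set (ℤ → A)) (n : ℕ) (w : List A) : Prop :=
  w.length = n ∧ w ∈ language X ∧
    ∃ a b : A, a ≠ b ∧ (w ++ [a]) ∈ language X ∧ (w ++ [b]) ∈ language X

/-- `w` is a left-special word of length `n` for `X`. -/
def LeftSpecial {A : Type} (X : Set (ℤ → A)) (n : ℕ) (w : List A) : Prop :=
  w.length = n ∧ w ∈ language X ∧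
    ∃ c d : A, c ≠ d ∧ (c :: w) ∈ language X ∧ (d :: w) ∈ language X

/-- `w` satisfies the defining constraints of an `n`-right branch word: it is in the
language, begins with a right-special word of length `n`, contains no other
right-special word of length `n`, and has no repeated `n`-letter subword. -/
def RightBranchCand {A : Type} (X : Set (ℤ → A)) (n : ℕ) (w : List A) : Prop :=
  w ∈ language X ∧ n ≤ w.length ∧ RightSpecial X n (w.take n) ∧
    (∀ i, i + n ≤ w.length → RightSpecial X n ((w.drop i).take n) → i = 0) ∧
    (∀ i j, i + n ≤ w.length → j + n ≤ w.length →
      (w.drop i).take n = (w.drop j).take n → i = j)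

/-- `w` satisfies the defining constraints of an `n`-left branch word. -/
def LeftBranchCand {A : Type} (X : Set (ℤ → A)) (n : ℕ) (w : List A) : Prop :=
  w ∈ language X ∧ n ≤ w.length ∧ LeftSpecial X n (w.drop (w.length - n)) ∧
    (∀ i, i + n ≤ w.length → LeftSpecial X n ((w.drop i).take n) → i + n = w.length) ∧
    (∀ i j, i + n ≤ w.length → j + n ≤ w.length →
      (w.drop i).take n = (w.drop j).take n → i = j)

/-- An `n`-right branch word: maximal under subword inclusion among words
satisfying the right branch constraints. -/
def IsRightBranchWord {A : Type} (X : Set (ℤ → A)) (n : ℕ) (w : List A) : Prop :=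
  RightBranchCand X n w ∧ ∀ w', RightBranchCand X n w' → w <:+: w' → w' = w

/-- An `n`-left branch word: maximal under subword inclusion among words
satisfying the left branch constraints. -/
def IsLeftBranchWord {A : Type} (X : Set (ℤ → A)) (n : ℕ) (w : List A) : Prop :=
  LeftBranchCand X n w ∧ ∀ w', LeftBranchCand X n w' → w <:+: w' → w' = w

/-- An `n`-branch word is an `n`-left or `n`-right branch word. -/
def IsBranchWord {A : Type} (X : Set (ℤ → A)) (n : ℕ) (w : List A) : Prop :=
  IsRightBranchWord X n w ∨ IsLeftBranchWord X n w

/-- `x` is an isolated point of `X`. -/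
def IsIsolatedPoint {A : Type} [TopologicalSpace A] (X : Set (ℤ → A)) (x : ℤ → A) : Prop :=
  ∃ U : Set (ℤ → A), IsOpen U ∧ U ∩ X = {x}

/-- `x` is an isolated periodic point of `X`. -/
def IsIsolatedPeriodicPt {A : Type} [TopologicalSpace A] (X : Set (ℤ → A)) (x : ℤ → A) : Prop :=
  x ∈ X ∧ IsIsolatedPoint X x ∧ ∃ p : ℕ, 1 ≤ p ∧ ∀ m : ℤ, x (m + (p : ℤ)) = x m

/-- The shift restricted to a subshift, as a bijection of the subshift. -/
def shiftRestrict {A : Type} [TopologicalSpace A] {X : Set (ℤ → A)} (hX : IsSubshift X) :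
    Equiv.Perm ↥X where
  toFun x := ⟨shiftPerm A x, by
    have h : shiftPerm A (x : ℤ → A) ∈ (shiftPerm A) '' X := ⟨x, x.2, rfl⟩
    rwa [hX.2] at h⟩
  invFun x := ⟨(shiftPerm A).symm x, by
    have h : (x : ℤ → A) ∈ (shiftPerm A) '' X := by rw [hX.2]; exact x.2
    obtain ⟨y, hy, hyx⟩ := h
    have h2 : (shiftPerm A).symm (x : ℤ → A) = y := by rw [← hyx]; simp
    rwa [h2]⟩
  left_inv x := Subtype.ext (by simp)
  right_inv x := Subtype.ext (by simp)

/-- The automorphism group of a subshift: shift-commuting self-homeomorphisms of `X`. -/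
def Aut {A : Type} [TopologicalSpace A] {X : Set (ℤ → A)} (hX : IsSubshift X) :
    Subgroup (Equiv.Perm ↥X) where
  carrier := {φ : Equiv.Perm ↥X | Continuous ⇑φ ∧ Continuous ⇑(φ⁻¹) ∧
    ∀ x, φ (shiftRestrict hX x) = shiftRestrict hX (φ x)}
  one_mem' := ⟨continuous_id, continuous_id, fun _ => rfl⟩
  mul_mem' := by
    rintro a b ⟨ha1, ha2, ha3⟩ ⟨hb1, hb2, hb3⟩
    refine ⟨?_, ?_, fun x => ?_⟩
    · exact ha1.comp hb1
    · exact hb2.comp ha2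
    · simp only [Equiv.Perm.mul_apply, hb3, ha3]
  inv_mem' := by
    rintro a ⟨ha1, ha2, ha3⟩
    refine ⟨ha2, by simpa using ha1, fun x => ?_⟩
    apply a.injective
    rw [ha3]; simp

/-- `φ` is induced by the block map `Φ` with range `N`. -/
def InducedBy {A : Type} {X : Set (ℤ → A)} (φ : Equiv.Perm ↥X) (N : ℕ)
    (Φ : (Fin (2 * N + 1) → A) → A) : Prop :=
  ∀ (x : ↥X) (m : ℤ), (φ x : ℤ → A) m = Φ (fun j => (x : ℤ → A) (m - (N : ℤ) + ((j : ℕ) : ℤ)))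

/-- `φ` has range `N`: it is induced by some block map on words of length `2N+1`. -/
def HasRange {A : Type} {X : Set (ℤ → A)} (φ : Equiv.Perm ↥X) (N : ℕ) : Prop :=
  ∃ Φ : (Fin (2 * N + 1) → A) → A, InducedBy φ N Φ

/-- The action of a block map `Φ` of range `N` on a word `w`, producing a word of
length `w.length - 2N`. -/
def blockApply {A : Type} (N : ℕ) (Φ : (Fin (2 * N + 1) → A) → A) (w : List A) : List A :=
  List.ofFn (fun j : Fin (w.length - 2 * N) =>
    Φ (fun i : Fin (2 * N + 1) => w.get ⟨(j : ℕ) + (i : ℕ), by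
      have hj := j.isLt; have hi := i.isLt; omega⟩))

namespace BranchAux

variable {A : Type}

/-- The word of `x` starting at position `q`, of length `k`. -/
def wordAt (x : ℤ → A) (q : ℤ) (k : ℕ) : List A :=
  List.ofFn fun j : Fin k => x (q + (j : ℕ))

@[simp] lemma length_wordAt (x : ℤ → A) (q : ℤ) (k : ℕ) : (wordAt x q k).length = k := by
  simp [wordAt]

lemma getElem_wordAt (x : ℤ → A) (q : ℤ) (k : ℕ) (j : ℕ) (h : j < (wordAt x q k).length) :
    (wordAt x q k)[j] = x (q + (j : ℕ)) := by
  simp [wordAt]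

lemma wordAt_eq_of (x x' : ℤ → A) (q q' : ℤ) (k : ℕ)
    (h : ∀ j : ℕ, j < k → x (q + j) = x' (q' + j)) :
    wordAt x q k = wordAt x' q' k := by
  apply List.ext_getElem (by simp)
  intro j h1 h2
  rw [getElem_wordAt, getElem_wordAt]
  exact h j (by simpa using h1)

lemma eq_of_wordAt_eq {x x' : ℤ → A} {q q' : ℤ} {k : ℕ}
    (h : wordAt x q k = wordAt x' q' k) (j : ℕ) (hj : j < k) :
    x (q + j) = x' (q' + j) := by
  have h1 : j < (wordAt x q k).length := by simpa using hj
  have h2 : j < (wordAt x' q' k).length := by simpa using hj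
  rw [← getElem_wordAt x q k j h1, ← getElem_wordAt x' q' k j h2]
  exact List.getElem_of_eq h h1

lemma wordAt_succ_right (x : ℤ → A) (q : ℤ) (k : ℕ) :
    wordAt x q (k + 1) = wordAt x q k ++ [x (q + (k : ℕ))] := by
  apply List.ext_getElem (by simp)
  intro j h1 h2
  rw [getElem_wordAt]
  rcases lt_or_ge j k with h | h
  · rw [List.getElem_append_left (by simpa using h), getElem_wordAt]
  · have hj : j = k := by simp at h1; omega
    subst hj
    rw [List.getElem_append_right (by simp)]
    simp

lemma wordAt_succ_left (x : ℤ → A) (q : ℤ) (k : ℕ) :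
    wordAt x q (k + 1) = x q :: wordAt x (q + 1) k := by
  apply List.ext_getElem (by simp)
  intro j h1 h2
  rw [getElem_wordAt]
  rcases Nat.eq_zero_or_pos j with rfl | h
  · simp
  · obtain ⟨j', rfl⟩ : ∃ j', j = j' + 1 := ⟨j - 1, by omega⟩
    rw [List.getElem_cons_succ, getElem_wordAt]
    congr 1
    push_cast
    ring

lemma wordAt_mem_language {X : Set (ℤ → A)} {x : ℤ → A} (hx : x ∈ X) (q : ℤ) (k : ℕ) :
    wordAt x q k ∈ language X := by
  refine ⟨x, hx, q, fun j => ?_⟩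
  rw [List.get_eq_getElem, getElem_wordAt]

lemma drop_take_wordAt (x : ℤ → A) (q : ℤ) {i n L : ℕ} (h : i + n ≤ L) :
    ((wordAt x q L).drop i).take n = wordAt x (q + (i : ℕ)) n := by
  apply List.ext_getElem (by simp; omega)
  intro j h1 h2
  have hj : j < n := by simp at h1; omega
  rw [List.getElem_take, List.getElem_drop, getElem_wordAt, getElem_wordAt]
  congr 1
  push_cast
  ring

lemma take_wordAt (x : ℤ → A) (q : ℤ) {n L : ℕ} (h : n ≤ L) :
    (wordAt x q L).take n = wordAt x q n := by
  have := drop_take_wordAt x q (i := 0) (n := n) (L := L) (by omega)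
  simpa using this

lemma drop_wordAt (x : ℤ → A) (q : ℤ) (i L : ℕ) (h : i ≤ L) :
    (wordAt x q L).drop i = wordAt x (q + (i : ℕ)) (L - i) := by
  apply List.ext_getElem (by simp)
  intro j h1 h2
  rw [List.getElem_drop, getElem_wordAt, getElem_wordAt]
  congr 1
  push_cast
  ring

/-- Unique right extension in the language. -/
def UniqR (X : Set (ℤ → A)) (w : List A) : Prop :=
  ∀ a b : A, w ++ [a] ∈ language X → w ++ [b] ∈ language X → a = b

/-- Unique left extension in the language. -/
def UniqL (X : Set (ℤ → A)) (w : List A) : Prop :=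
  ∀ a b : A, (a :: w) ∈ language X → (b :: w) ∈ language X → a = b

lemma uniqR_of_not_rs {X : Set (ℤ → A)} {n : ℕ} {w : List A} (hlen : w.length = n)
    (hl : w ∈ language X) (h : ¬ RightSpecial X n w) : UniqR X w := by
  intro a b ha hb
  by_contra hab
  exact h ⟨hlen, hl, a, b, hab, ha, hb⟩

lemma uniqL_of_not_ls {X : Set (ℤ → A)} {n : ℕ} {w : List A} (hlen : w.length = n)
    (hl : w ∈ language X) (h : ¬ LeftSpecial X n w) : UniqL X w := by
  intro a b ha hb
  by_contra hab
  exact h ⟨hlen, hl, a, b, hab, ha, hb⟩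

end BranchAux

namespace BranchAux

variable {A : Type}

lemma rightProp {X : Set (ℤ → A)} {x : ℤ → A} (hx : x ∈ X) {n : ℕ} (hn : 1 ≤ n)
    (q : ℤ) (d k : ℕ) (hd : 1 ≤ d) (hdk : d ≤ k)
    (h0 : wordAt x q n = wordAt x (q + (d : ℕ)) n)
    (hNR : ∀ t : ℕ, t ≤ k → UniqR X (wordAt x (q + (t : ℕ)) n)) :
    ∀ t : ℕ, (wordAt x (q + (t : ℕ)) n = wordAt x (q + (t : ℕ) + (d : ℕ)) n) ∧
      UniqR X (wordAt x (q + (t : ℕ)) n) := by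
  intro t
  induction t using Nat.strong_induction_on with
  | _ t IH =>
  have heqpart : wordAt x (q + (t : ℕ)) n = wordAt x (q + (t : ℕ) + (d : ℕ)) n := by
    rcases Nat.eq_zero_or_pos t with rfl | ht
    · simpa using h0
    · obtain ⟨t', rfl⟩ : ∃ t', t = t' + 1 := ⟨t - 1, by omega⟩
      obtain ⟨heq, hu⟩ := IH t' (by omega)
      have hlast : x (q + (t' : ℕ) + (n : ℕ)) = x (q + (t' : ℕ) + (d : ℕ) + (n : ℕ)) := by
        apply hu
        · rw [← wordAt_succ_right]
          exact wordAt_mem_language hx _ _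
        · rw [heq]
          rw [show q + (t' : ℕ) + (d : ℕ) + (n : ℕ) = (q + (t' : ℕ) + (d : ℕ)) + (n : ℕ) by ring,
            ← wordAt_succ_right]
          exact wordAt_mem_language hx _ _
      apply wordAt_eq_of
      intro j hj
      rcases lt_or_ge (j + 1) n with hj1 | hj1
      · have h2 := eq_of_wordAt_eq heq (j + 1) hj1
        have e1 : q + ((t' + 1 : ℕ) : ℤ) + (j : ℕ) = q + (t' : ℕ) + ((j + 1 : ℕ) : ℤ) := by
          push_cast; ring
        have e2 : q + ((t' + 1 : ℕ) : ℤ) + (d : ℕ) + (j : ℕ)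
            = q + (t' : ℕ) + (d : ℕ) + ((j + 1 : ℕ) : ℤ) := by push_cast; ring
        rw [e1, e2]
        exact h2
      · have hjn : j = n - 1 := by omega
        have e1 : q + ((t' + 1 : ℕ) : ℤ) + (j : ℕ) = q + (t' : ℕ) + (n : ℕ) := by
          subst hjn; push_cast; omega
        have e2 : q + ((t' + 1 : ℕ) : ℤ) + (d : ℕ) + (j : ℕ)
            = q + (t' : ℕ) + (d : ℕ) + (n : ℕ) := by subst hjn; push_cast; omega
        rw [e1, e2]
        exact hlast
  refine ⟨heqpart, ?_⟩
  rcases le_or_gt t k with h | h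
  · exact hNR t h
  · have h1 := IH (t - d) (by omega)
    have h2 : wordAt x (q + ((t - d : ℕ) : ℤ)) n = wordAt x (q + (t : ℕ)) n := by
      have := h1.1
      rwa [show q + ((t - d : ℕ) : ℤ) + (d : ℕ) = q + (t : ℕ) by push_cast; omega] at this
    rw [← h2]
    exact h1.2

lemma rightForce {X : Set (ℤ → A)} {x y : ℤ → A} (hx : x ∈ X) (hy : y ∈ X) {n : ℕ} (hn : 1 ≤ n)
    (q : ℤ) (hU : ∀ t : ℕ, UniqR X (wordAt x (q + (t : ℕ)) n))
    (hagr : ∀ j : ℕ, j < n → y (q + (j : ℕ)) = x (q + (j : ℕ))) :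
    ∀ s : ℕ, y (q + (s : ℕ)) = x (q + (s : ℕ)) := by
  intro s
  induction s using Nat.strong_induction_on with
  | _ s IH =>
  rcases lt_or_ge s n with h | h
  · exact hagr s h
  · set t := s - n with ht
    have hyx : wordAt y (q + (t : ℕ)) n = wordAt x (q + (t : ℕ)) n := by
      apply wordAt_eq_of
      intro j hj
      have := IH (t + j) (by omega)
      rwa [show q + ((t + j : ℕ) : ℤ) = q + (t : ℕ) + (j : ℕ) by push_cast; ring] at this
    have h1 : wordAt x (q + (t : ℕ)) n ++ [x (q + (t : ℕ) + (n : ℕ))] ∈ language X := by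
      rw [← wordAt_succ_right]
      exact wordAt_mem_language hx _ _
    have h2 : wordAt x (q + (t : ℕ)) n ++ [y (q + (t : ℕ) + (n : ℕ))] ∈ language X := by
      rw [← hyx, ← wordAt_succ_right]
      exact wordAt_mem_language hy _ _
    have h3 := hU t _ _ h2 h1
    rwa [show q + (s : ℕ) = q + (t : ℕ) + (n : ℕ) by push_cast; omega]

lemma leftProp {X : Set (ℤ → A)} {x : ℤ → A} (hx : x ∈ X) {n : ℕ} (hn : 1 ≤ n)
    (r : ℤ) (d k : ℕ) (hd : 1 ≤ d) (hdk : d ≤ k)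
    (h0 : wordAt x (r - (d : ℕ)) n = wordAt x r n)
    (hNL : ∀ t : ℕ, t ≤ k → UniqL X (wordAt x (r - (t : ℕ)) n)) :
    ∀ t : ℕ, (wordAt x (r - (d : ℕ) - (t : ℕ)) n = wordAt x (r - (t : ℕ)) n) ∧
      UniqL X (wordAt x (r - (t : ℕ)) n) := by
  intro t
  induction t using Nat.strong_induction_on with
  | _ t IH =>
  have heqpart : wordAt x (r - (d : ℕ) - (t : ℕ)) n = wordAt x (r - (t : ℕ)) n := by
    rcases Nat.eq_zero_or_pos t with rfl | ht
    · simpa using h0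
    · obtain ⟨t', rfl⟩ : ∃ t', t = t' + 1 := ⟨t - 1, by omega⟩
      obtain ⟨heq, hu⟩ := IH t' (by omega)
      have hfirst : x (r - (d : ℕ) - (t' : ℕ) - 1) = x (r - (t' : ℕ) - 1) := by
        apply hu
        · rw [← heq]
          have e : wordAt x (r - (d : ℕ) - (t' : ℕ)) n
              = wordAt x ((r - (d : ℕ) - (t' : ℕ) - 1) + 1) n := by congr 1; ring
          rw [e, ← wordAt_succ_left]
          exact wordAt_mem_language hx _ _
        · have e : wordAt x (r - (t' : ℕ)) n = wordAt x ((r - (t' : ℕ) - 1) + 1) n := by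
            congr 1; ring
          rw [e, ← wordAt_succ_left]
          exact wordAt_mem_language hx _ _
      apply wordAt_eq_of
      intro j hj
      rcases Nat.eq_zero_or_pos j with rfl | hjpos
      · have e1 : r - (d : ℕ) - ((t' + 1 : ℕ) : ℤ) + ((0 : ℕ) : ℤ)
            = r - (d : ℕ) - (t' : ℕ) - 1 := by push_cast; ring
        have e2 : r - ((t' + 1 : ℕ) : ℤ) + ((0 : ℕ) : ℤ) = r - (t' : ℕ) - 1 := by
          push_cast; ring
        rw [e1, e2]
        exact hfirst
      · obtain ⟨j', rfl⟩ : ∃ j', j = j' + 1 := ⟨j - 1, by omega⟩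
        have h2 := eq_of_wordAt_eq heq j' (by omega)
        have e1 : r - (d : ℕ) - ((t' + 1 : ℕ) : ℤ) + ((j' + 1 : ℕ) : ℤ)
            = r - (d : ℕ) - (t' : ℕ) + (j' : ℕ) := by push_cast; ring
        have e2 : r - ((t' + 1 : ℕ) : ℤ) + ((j' + 1 : ℕ) : ℤ) = r - (t' : ℕ) + (j' : ℕ) := by
          push_cast; ring
        rw [e1, e2]
        exact h2
  refine ⟨heqpart, ?_⟩
  rcases le_or_gt t k with h | h
  · exact hNL t h
  · have h1 := IH (t - d) (by omega)
    have h2 : wordAt x (r - (t : ℕ)) n = wordAt x (r - ((t - d : ℕ) : ℤ)) n := by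
      have := h1.1
      rwa [show r - (d : ℕ) - ((t - d : ℕ) : ℤ) = r - (t : ℕ) by push_cast; omega] at this
    rw [h2]
    exact h1.2

lemma leftForce {X : Set (ℤ → A)} {x y : ℤ → A} (hx : x ∈ X) (hy : y ∈ X) {n : ℕ} (hn : 1 ≤ n)
    (b : ℤ) (hU : ∀ s : ℕ, UniqL X (wordAt x (b - (s : ℕ)) n))
    (hagr : ∀ j : ℕ, j < n → y (b + (j : ℕ)) = x (b + (j : ℕ))) :
    ∀ s : ℕ, ∀ j : ℕ, j < n → y (b - (s : ℕ) + (j : ℕ)) = x (b - (s : ℕ) + (j : ℕ)) := by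
  intro s
  induction s with
  | zero =>
    intro j hj
    have := hagr j hj
    rwa [show b - ((0 : ℕ) : ℤ) + (j : ℕ) = b + (j : ℕ) by push_cast; ring]
  | succ s IH =>
    have hw : wordAt y (b - (s : ℕ)) n = wordAt x (b - (s : ℕ)) n :=
      wordAt_eq_of _ _ _ _ _ (IH)
    have key : y (b - (s : ℕ) - 1) = x (b - (s : ℕ) - 1) := by
      apply hU s
      · rw [← hw]
        have e : wordAt y (b - (s : ℕ)) n = wordAt y ((b - (s : ℕ) - 1) + 1) n := by
          congr 1; ring
        rw [e, ← wordAt_succ_left]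
        exact wordAt_mem_language hy _ _
      · have e : wordAt x (b - (s : ℕ)) n = wordAt x ((b - (s : ℕ) - 1) + 1) n := by
          congr 1; ring
        rw [e, ← wordAt_succ_left]
        exact wordAt_mem_language hx _ _
    intro j hj
    rcases Nat.eq_zero_or_pos j with rfl | hjpos
    · rwa [show b - ((s + 1 : ℕ) : ℤ) + ((0 : ℕ) : ℤ) = b - (s : ℕ) - 1 by push_cast; ring]
    · obtain ⟨j', rfl⟩ : ∃ j', j = j' + 1 := ⟨j - 1, by omega⟩
      have := IH j' (by omega)
      rwa [show b - ((s + 1 : ℕ) : ℤ) + ((j' + 1 : ℕ) : ℤ) = b - (s : ℕ) + (j' : ℕ) by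
        push_cast; ring]

end BranchAux

namespace BranchAux

variable {A : Type} [Fintype A]

lemma rightDichotomy {X : Set (ℤ → A)} {x : ℤ → A} (hx : x ∈ X) {n : ℕ} (hn : 1 ≤ n) (p : ℤ) :
    (∃ k : ℕ, RightBranchCand X n (wordAt x (p - (k : ℕ)) (k + n)))
    ∨ (∃ q : ℤ, q ≤ p ∧ ∃ d : ℕ, 1 ≤ d ∧ (∀ i : ℤ, q ≤ i → x (i + (d : ℕ)) = x i) ∧
        (∀ y, y ∈ X → (∀ j : ℕ, j < n → y (q + (j : ℕ)) = x (q + (j : ℕ))) →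
          ∀ s : ℕ, y (q + (s : ℕ)) = x (q + (s : ℕ)))) := by
  classical
  have hstop : ∃ k : ℕ, RightSpecial X n (wordAt x (p - (k : ℕ)) n) ∨
      ∃ k' < k, wordAt x (p - (k : ℕ)) n = wordAt x (p - (k' : ℕ)) n := by
    obtain ⟨k1, k2, hne, heq⟩ := Fintype.exists_ne_map_eq_of_card_lt
      (fun k : Fin (Fintype.card (Fin n → A) + 1) =>
        fun j : Fin n => x (p - ((k : ℕ) : ℤ) + ((j : ℕ) : ℤ)))
      (by simp)
    have hb : ∀ (a b : Fin (Fintype.card (Fin n → A) + 1)),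
        (fun j : Fin n => x (p - ((a : ℕ) : ℤ) + ((j : ℕ) : ℤ)))
          = (fun j : Fin n => x (p - ((b : ℕ) : ℤ) + ((j : ℕ) : ℤ))) →
        wordAt x (p - ((a : ℕ) : ℤ)) n = wordAt x (p - ((b : ℕ) : ℤ)) n := by
      intro a b hab
      exact wordAt_eq_of _ _ _ _ _ (fun j hj => congrFun hab ⟨j, hj⟩)
    rcases hne.lt_or_gt with h | h
    · exact ⟨(k2 : ℕ), Or.inr ⟨(k1 : ℕ), h, hb k2 k1 heq.symm⟩⟩
    · exact ⟨(k1 : ℕ), Or.inr ⟨(k2 : ℕ), h, hb k1 k2 heq⟩⟩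
  set k₀ := Nat.find hstop with hk₀def
  have hk₀ := Nat.find_spec hstop
  have hmin : ∀ k'' , k'' < k₀ → ¬(RightSpecial X n (wordAt x (p - (k'' : ℕ)) n) ∨
      ∃ k' < k'', wordAt x (p - (k'' : ℕ)) n = wordAt x (p - (k' : ℕ)) n) :=
    fun k'' h => Nat.find_min hstop h
  have hwin : ∀ i : ℕ, i ≤ k₀ →
      ((wordAt x (p - (k₀ : ℕ)) (k₀ + n)).drop i).take n
        = wordAt x (p - ((k₀ - i : ℕ) : ℤ)) n := by
    intro i hi
    rw [drop_take_wordAt x _ (by omega)]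
    congr 1
    push_cast
    omega
  by_cases hrs : RightSpecial X n (wordAt x (p - (k₀ : ℕ)) n)
  · left
    refine ⟨k₀, wordAt_mem_language hx _ _, by simp, ?_, ?_, ?_⟩
    · rw [take_wordAt x _ (by omega)]
      exact hrs
    · intro i hi hrsi
      simp only [length_wordAt] at hi
      by_contra hi0
      rw [hwin i (by omega)] at hrsi
      exact hmin (k₀ - i) (by omega) (Or.inl hrsi)
    · intro i j hi hj hij
      simp only [length_wordAt] at hi hj
      have hik : i ≤ k₀ := by omega
      have hjk : j ≤ k₀ := by omega
      rw [hwin i hik, hwin j hjk] at hij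
      by_contra hne
      have key : ∀ a b : ℕ, a < b → b ≤ k₀ →
          wordAt x (p - ((k₀ - a : ℕ) : ℤ)) n = wordAt x (p - ((k₀ - b : ℕ) : ℤ)) n → False := by
        intro a b hab hbk hw
        rcases Nat.eq_zero_or_pos a with rfl | ha
        · rw [Nat.sub_zero] at hw
          exact hmin (k₀ - b) (by omega) (Or.inl (hw ▸ hrs))
        · exact hmin (k₀ - a) (by omega) (Or.inr ⟨k₀ - b, by omega, hw⟩)
      rcases Nat.lt_or_ge i j with h | h
      · exact key i j h hjk hij
      · exact key j i (by omega) hik hij.symm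
  · right
    have hrep := hk₀.resolve_left hrs
    obtain ⟨k', hk'lt, heq⟩ := hrep
    refine ⟨p - (k₀ : ℕ), by omega, k₀ - k', by omega, ?_, ?_⟩
    all_goals {
      have h0 : wordAt x (p - (k₀ : ℕ)) n
          = wordAt x (p - (k₀ : ℕ) + ((k₀ - k' : ℕ) : ℤ)) n := by
        rw [show p - (k₀ : ℕ) + ((k₀ - k' : ℕ) : ℤ) = p - (k' : ℕ) by push_cast; omega]
        exact heq
      have hNR : ∀ t : ℕ, t ≤ k₀ → UniqR X (wordAt x (p - (k₀ : ℕ) + (t : ℕ)) n) := by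
        intro t ht
        have hpos : p - (k₀ : ℕ) + (t : ℕ) = p - ((k₀ - t : ℕ) : ℤ) := by push_cast; omega
        rw [hpos]
        refine uniqR_of_not_rs (n := n) (by simp) (wordAt_mem_language hx _ _) ?_
        rcases Nat.eq_zero_or_pos t with rfl | ht0
        · simpa using hrs
        · intro hcon
          exact hmin (k₀ - t) (by omega) (Or.inl hcon)
      have hprop := rightProp hx hn (p - (k₀ : ℕ)) (k₀ - k') k₀ (by omega) (by omega) h0 hNR
      first
      | · -- periodicity
          intro i hi
          have ht := (hprop ((i - (p - (k₀ : ℕ))).toNat)).1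
          have e : p - (k₀ : ℕ) + (((i - (p - (k₀ : ℕ))).toNat : ℕ) : ℤ) = i := by omega
          have h2 := eq_of_wordAt_eq ht 0 hn
          rw [e] at h2
          simpa using h2.symm
      | · -- forcing
          intro y hy hagr s
          exact rightForce hx hy hn (p - (k₀ : ℕ)) (fun t => (hprop t).2) hagr s
    }

end BranchAux

namespace BranchAux

variable {A : Type} [Fintype A]

lemma leftDichotomy {X : Set (ℤ → A)} {x : ℤ → A} (hx : x ∈ X) {n : ℕ} (hn : 1 ≤ n) (p : ℤ) :
    (∃ k : ℕ, LeftBranchCand X n (wordAt x p (k + n)))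
    ∨ (∀ y, y ∈ X → (∀ j : ℕ, j < n → y (p + (j : ℕ)) = x (p + (j : ℕ))) →
        ∀ s : ℕ, y (p - (s : ℕ)) = x (p - (s : ℕ))) := by
  classical
  have hstop : ∃ k : ℕ, LeftSpecial X n (wordAt x (p + (k : ℕ)) n) ∨
      ∃ k' < k, wordAt x (p + (k : ℕ)) n = wordAt x (p + (k' : ℕ)) n := by
    obtain ⟨k1, k2, hne, heq⟩ := Fintype.exists_ne_map_eq_of_card_lt
      (fun k : Fin (Fintype.card (Fin n → A) + 1) =>
        fun j : Fin n => x (p + ((k : ℕ) : ℤ) + ((j : ℕ) : ℤ)))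
      (by simp)
    have hb : ∀ (a b : Fin (Fintype.card (Fin n → A) + 1)),
        (fun j : Fin n => x (p + ((a : ℕ) : ℤ) + ((j : ℕ) : ℤ)))
          = (fun j : Fin n => x (p + ((b : ℕ) : ℤ) + ((j : ℕ) : ℤ))) →
        wordAt x (p + ((a : ℕ) : ℤ)) n = wordAt x (p + ((b : ℕ) : ℤ)) n := by
      intro a b hab
      exact wordAt_eq_of _ _ _ _ _ (fun j hj => congrFun hab ⟨j, hj⟩)
    rcases hne.lt_or_gt with h | h
    · exact ⟨(k2 : ℕ), Or.inr ⟨(k1 : ℕ), h, hb k2 k1 heq.symm⟩⟩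
    · exact ⟨(k1 : ℕ), Or.inr ⟨(k2 : ℕ), h, hb k1 k2 heq⟩⟩
  set k₀ := Nat.find hstop with hk₀def
  have hk₀ := Nat.find_spec hstop
  have hmin : ∀ k'', k'' < k₀ → ¬(LeftSpecial X n (wordAt x (p + (k'' : ℕ)) n) ∨
      ∃ k' < k'', wordAt x (p + (k'' : ℕ)) n = wordAt x (p + (k' : ℕ)) n) :=
    fun k'' h => Nat.find_min hstop h
  have hwin : ∀ i : ℕ, i ≤ k₀ →
      ((wordAt x p (k₀ + n)).drop i).take n = wordAt x (p + (i : ℕ)) n := by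
    intro i hi
    rw [drop_take_wordAt x _ (by omega)]
  by_cases hls : LeftSpecial X n (wordAt x (p + (k₀ : ℕ)) n)
  · left
    refine ⟨k₀, wordAt_mem_language hx _ _, by simp, ?_, ?_, ?_⟩
    · rw [show (wordAt x p (k₀ + n)).length - n = k₀ by simp,
        drop_wordAt x p k₀ (k₀ + n) (by omega), Nat.add_sub_cancel_left]
      exact hls
    · intro i hi hlsi
      simp only [length_wordAt] at hi
      rw [hwin i (by omega)] at hlsi
      simp only [length_wordAt]
      by_contra hik
      exact hmin i (by omega) (Or.inl hlsi)
    · intro i j hi hj hij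
      simp only [length_wordAt] at hi hj
      have hik : i ≤ k₀ := by omega
      have hjk : j ≤ k₀ := by omega
      rw [hwin i hik, hwin j hjk] at hij
      by_contra hne
      have key : ∀ a b : ℕ, a < b → b ≤ k₀ →
          wordAt x (p + (a : ℕ)) n = wordAt x (p + (b : ℕ)) n → False := by
        intro a b hab hbk hw
        rcases Nat.lt_or_ge b k₀ with h | h
        · exact hmin b h (Or.inr ⟨a, hab, hw.symm⟩)
        · have hb : b = k₀ := by omega
          subst hb
          exact hmin a hab (Or.inl (hw.symm ▸ hls))
      rcases Nat.lt_or_ge i j with h | h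
      · exact key i j h hjk hij
      · exact key j i (by omega) hik hij.symm
  · right
    have hrep := hk₀.resolve_left hls
    obtain ⟨k', hk'lt, heq⟩ := hrep
    have h0 : wordAt x (p + (k₀ : ℕ) - ((k₀ - k' : ℕ) : ℤ)) n = wordAt x (p + (k₀ : ℕ)) n := by
      rw [show p + (k₀ : ℕ) - ((k₀ - k' : ℕ) : ℤ) = p + (k' : ℕ) by push_cast; omega]
      exact heq.symm
    have hNL : ∀ t : ℕ, t ≤ k₀ → UniqL X (wordAt x (p + (k₀ : ℕ) - (t : ℕ)) n) := by
      intro t ht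
      have hpos : p + (k₀ : ℕ) - (t : ℕ) = p + ((k₀ - t : ℕ) : ℤ) := by push_cast; omega
      rw [hpos]
      refine uniqL_of_not_ls (n := n) (by simp) (wordAt_mem_language hx _ _) ?_
      rcases Nat.eq_zero_or_pos t with rfl | ht0
      · simpa using hls
      · intro hcon
        exact hmin (k₀ - t) (by omega) (Or.inl hcon)
    have hprop := leftProp hx hn (p + (k₀ : ℕ)) (k₀ - k') k₀ (by omega) (by omega) h0 hNL
    intro y hy hagr s
    have hU : ∀ s : ℕ, UniqL X (wordAt x (p - (s : ℕ)) n) := by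
      intro s'
      have e : p - (s' : ℕ) = p + (k₀ : ℕ) - ((k₀ + s' : ℕ) : ℤ) := by push_cast; omega
      rw [e]
      exact (hprop (k₀ + s')).2
    have := leftForce hx hy hn p hU hagr s 0 hn
    rwa [show p - (s : ℕ) + ((0 : ℕ) : ℤ) = p - (s : ℕ) by push_cast; ring] at this

end BranchAux

namespace BranchAux

variable {A : Type}

lemma shift_mem {X : Set (ℤ → A)} [TopologicalSpace A] (hX : IsSubshift X)
    {x : ℤ → A} (hx : x ∈ X) (d : ℕ) : (fun i => x (i + (d : ℕ))) ∈ X := by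
  induction d with
  | zero => simpa using hx
  | succ d IH =>
    have h : shiftPerm A (fun i => x (i + (d : ℕ))) ∈ shiftPerm A '' X := ⟨_, IH, rfl⟩
    rw [hX.2] at h
    have e : (shiftPerm A (fun i => x (i + (d : ℕ)))) = fun i => x (i + ((d + 1 : ℕ) : ℤ)) := by
      funext i
      show x (i + 1 + (d : ℕ)) = x (i + ((d + 1 : ℕ) : ℤ))
      congr 1
      push_cast
      ring_nf
    rwa [e] at h

lemma isolated_periodic {X : Set (ℤ → A)} [TopologicalSpace A] [DiscreteTopology A]
    (hX : IsSubshift X) {x : ℤ → A} (hx : x ∈ X) {n : ℕ} (hn : 1 ≤ n)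
    (q : ℤ) (d : ℕ) (hd : 1 ≤ d)
    (hper : ∀ i : ℤ, q ≤ i → x (i + (d : ℕ)) = x i)
    (hforce : ∀ y, y ∈ X → (∀ j : ℕ, j < n → y (q + (j : ℕ)) = x (q + (j : ℕ))) → y = x) :
    IsIsolatedPeriodicPt X x := by
  have hper' : ∀ m : ℤ, x (m + (d : ℕ)) = x m := by
    have hy : (fun i => x (i + (d : ℕ))) = x := by
      apply hforce _ (shift_mem hX hx d)
      intro j hj
      exact hper (q + (j : ℕ)) (by omega)
    intro m
    exact congrFun hy m
  refine ⟨hx, ⟨⋂ j : Fin n, (fun z : ℤ → A => z (q + ((j : ℕ) : ℤ))) ⁻¹' {x (q + ((j : ℕ) : ℤ))},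
    ?_, ?_⟩, d, hd, hper'⟩
  · exact isOpen_iInter_of_finite fun j =>
      (continuous_apply (q + ((j : ℕ) : ℤ))).isOpen_preimage _ (isOpen_discrete _)
  · ext z
    simp only [Set.mem_inter_iff, Set.mem_iInter, Set.mem_preimage, Set.mem_singleton_iff]
    constructor
    · rintro ⟨h1, h2⟩
      exact hforce z h2 (fun j hj => h1 ⟨j, hj⟩)
    · rintro rfl
      exact ⟨fun j => rfl, hx⟩

lemma length_le_of_windows_inj [Fintype A] {n : ℕ} {w : List A}
    (hlen : n ≤ w.length)
    (hinj : ∀ i j, i + n ≤ w.length → j + n ≤ w.length →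
      (w.drop i).take n = (w.drop j).take n → i = j) :
    w.length ≤ n + Fintype.card (Fin n → A) := by
  have h : w.length - n + 1 ≤ Fintype.card (Fin n → A) := by
    have hinj' : Function.Injective (fun i : Fin (w.length - n + 1) =>
        fun j : Fin n => w[(i : ℕ) + (j : ℕ)]'(by have := i.isLt; have := j.isLt; omega)) := by
      intro i1 i2 h
      have e : (w.drop (i1 : ℕ)).take n = (w.drop (i2 : ℕ)).take n := by
        apply List.ext_getElem
        · simp only [List.length_take, List.length_drop]
          have := i1.isLt; have := i2.isLt
          omega
        · intro j h1 h2
          have hj : j < n := by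
            simp only [List.length_take, List.length_drop] at h1
            omega
          rw [List.getElem_take, List.getElem_drop, List.getElem_take, List.getElem_drop]
          exact congrFun h ⟨j, hj⟩
      exact Fin.ext (hinj _ _ (by have := i1.isLt; omega) (by have := i2.isLt; omega) e)
    simpa using Fintype.card_le_of_injective _ hinj'
  omega

lemma exists_max_generic [Fintype A] {n : ℕ} (C : List A → Prop)
    (hC : ∀ w', C w' → n ≤ w'.length ∧ (∀ i j, i + n ≤ w'.length → j + n ≤ w'.length →
      (w'.drop i).take n = (w'.drop j).take n → i = j))
    {w : List A} (hw : C w) :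
    ∃ w', (C w' ∧ ∀ w'', C w'' → w' <:+: w'' → w'' = w') ∧ w <:+: w' := by
  classical
  set S : Set ℕ := {L | ∃ w', C w' ∧ w <:+: w' ∧ w'.length = L} with hS
  have hbdd : BddAbove S := by
    refine ⟨n + Fintype.card (Fin n → A), ?_⟩
    rintro L ⟨w', hc, _, rfl⟩
    exact length_le_of_windows_inj (hC w' hc).1 (hC w' hc).2
  have hne : S.Nonempty := ⟨w.length, w, hw, List.infix_rfl, rfl⟩
  obtain ⟨w', hc, hinf, hlen⟩ := Nat.sSup_mem hne hbdd
  refine ⟨w', ⟨hc, fun w'' hc'' hinf'' => ?_⟩, hinf⟩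
  have h1 : w''.length ≤ sSup S := le_csSup hbdd ⟨w'', hc'', hinf.trans hinf'', rfl⟩
  exact ((hinf''.sublist).eq_of_length (le_antisymm hinf''.length_le (hlen ▸ h1))).symm

lemma occurrence_of_infix {w₀ w' : List A} (h : w₀ <:+: w') (o k : ℕ)
    (hk : o + k ≤ w₀.length) :
    ∃ t, t + k ≤ w'.length ∧ ∀ (i : ℕ), i < k →
      ∀ (h1 : t + i < w'.length) (h2 : o + i < w₀.length),
      w'[t + i]'h1 = w₀[o + i]'h2 := by
  obtain ⟨s, u, rfl⟩ := h
  have hlen : (s ++ w₀ ++ u).length = s.length + w₀.length + u.length := by simp; omega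
  refine ⟨s.length + o, by omega, fun i hi h1 h2 => ?_⟩
  have hlt : s.length + o + i < (s ++ w₀).length := by simp; omega
  rw [List.getElem_append_left hlt, List.getElem_append_right (by omega)]
  congr 1
  omega

lemma blockApply_agree {N : ℕ} {Φ₁ Φ₂ : (Fin (2 * N + 1) → A) → A} {w : List A}
    (hag : blockApply N Φ₁ w = blockApply N Φ₂ w)
    (f : Fin (2 * N + 1) → A) (t : ℕ) (ht : t + (2 * N + 1) ≤ w.length)
    (hocc : ∀ i : Fin (2 * N + 1), w[t + (i : ℕ)]'(by have := i.isLt; omega) = f i) :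
    Φ₁ f = Φ₂ f := by
  have h1 : t < w.length - 2 * N := by omega
  have h2 := congrFun (List.ofFn_inj.mp hag) ⟨t, h1⟩
  have h3 : (fun i : Fin (2 * N + 1) =>
      w.get ⟨t + (i : ℕ), by have := i.isLt; omega⟩) = f := by
    funext i
    rw [List.get_eq_getElem]
    exact hocc i
  rw [← h3]
  exact h2

end BranchAux


/-- Two automorphisms of range `⌊(n-1)/2⌋` which fix all isolated
periodic points and whose block maps agree on all `n`-branch words are equal. -/
theorem aut_eq_of_agree_on_branch_words
    {A : Type} [Fintype A] [TopologicalSpace A] [DiscreteTopology A]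
    (X : Set (ℤ → A)) (hX : IsSubshift X) (n : ℕ) (hn : 1 ≤ n)
    (φ₁ φ₂ : Equiv.Perm ↥X) (hφ₁ : φ₁ ∈ Aut hX) (hφ₂ : φ₂ ∈ Aut hX)
    (Φ₁ Φ₂ : (Fin (2 * ((n - 1) / 2) + 1) → A) → A)
    (hind₁ : InducedBy φ₁ ((n - 1) / 2) Φ₁) (hind₂ : InducedBy φ₂ ((n - 1) / 2) Φ₂)
    (hfix₁ : ∀ x : ↥X, IsIsolatedPeriodicPt X ↑x → φ₁ x = x)
    (hfix₂ : ∀ x : ↥X, IsIsolatedPeriodicPt X ↑x → φ₂ x = x)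
    (hagree : ∀ w : List A, IsBranchWord X n w →
      blockApply ((n - 1) / 2) Φ₁ w = blockApply ((n - 1) / 2) Φ₂ w) :
    φ₁ = φ₂ := by
  classical
  open BranchAux in
  set N := (n - 1) / 2 with hNdef
  have h2N : 2 * N + 1 ≤ n := by omega
  apply Equiv.ext
  intro x
  apply Subtype.ext
  funext m
  set p : ℤ := m - (N : ℕ) with hp
  -- helper: conclude from an occurrence of the window in a branch word
  have hfromBW : ∀ w₀ : List A, IsBranchWord X n w₀ →
      ∀ t : ℕ, t + (2 * N + 1) ≤ w₀.length →
      (∀ i : Fin (2 * N + 1), ∀ h : t + (i : ℕ) < w₀.length,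
        w₀[t + (i : ℕ)]'h = (x : ℤ → A) (m - ((N : ℕ) : ℤ) + ((i : ℕ) : ℤ))) →
      (φ₁ x : ℤ → A) m = (φ₂ x : ℤ → A) m := by
    intro w₀ hbw t ht hocc
    rw [hind₁ x m, hind₂ x m]
    exact blockApply_agree (hagree w₀ hbw)
      (fun j : Fin (2 * N + 1) => (x : ℤ → A) (m - ((N : ℕ) : ℤ) + ((j : ℕ) : ℤ))) t ht
      (fun i => hocc i (by have := i.isLt; omega))
  rcases rightDichotomy x.2 hn p with ⟨k, hc⟩ | ⟨q, hqp, d, hd, hper, hforce⟩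
  · -- right branch word case
    obtain ⟨w', ⟨hc', hmax⟩, hinf⟩ := exists_max_generic (RightBranchCand X n)
      (fun w'' hc'' => ⟨hc''.2.1, hc''.2.2.2.2⟩) hc
    obtain ⟨t, ht, hocc⟩ := occurrence_of_infix hinf k (2 * N + 1) (by simp; omega)
    refine hfromBW w' (Or.inl ⟨hc', hmax⟩) t ht ?_
    intro i hi
    have hilt := i.isLt
    have h2 : k + (i : ℕ) < (wordAt (x : ℤ → A) (p - (k : ℕ)) (k + n)).length := by
      simp only [length_wordAt]
      omega
    rw [hocc (i : ℕ) (by omega) hi h2, getElem_wordAt]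
    congr 1
    rw [hp]
    push_cast
    ring
  · rcases leftDichotomy x.2 hn p with ⟨k, hc⟩ | hlforce
    · -- left branch word case
      obtain ⟨w', ⟨hc', hmax⟩, hinf⟩ := exists_max_generic (LeftBranchCand X n)
        (fun w'' hc'' => ⟨hc''.2.1, hc''.2.2.2.2⟩) hc
      obtain ⟨t, ht, hocc⟩ := occurrence_of_infix hinf 0 (2 * N + 1) (by simp; omega)
      refine hfromBW w' (Or.inr ⟨hc', hmax⟩) t ht ?_
      intro i hi
      have hilt := i.isLt
      have h2 : 0 + (i : ℕ) < (wordAt (x : ℤ → A) p (k + n)).length := by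
        simp only [length_wordAt]
        omega
      rw [hocc (i : ℕ) (by omega) hi h2, getElem_wordAt]
      congr 1
      rw [hp]
      push_cast
      ring_nf
    · -- isolated periodic case
      have hforce' : ∀ y, y ∈ X →
          (∀ j : ℕ, j < n → y (q + (j : ℕ)) = (x : ℤ → A) (q + (j : ℕ))) →
          y = (x : ℤ → A) := by
        intro y hy hagr
        funext i
        rcases le_or_gt q i with h | h
        · have := hforce y hy hagr (i - q).toNat
          rwa [show q + (((i - q).toNat : ℕ) : ℤ) = i by omega] at this
        · have hagrP : ∀ j : ℕ, j < n →
              y (p + (j : ℕ)) = (x : ℤ → A) (p + (j : ℕ)) := by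
            intro j hj
            have := hforce y hy hagr ((p + (j : ℕ) - q).toNat)
            rwa [show q + ((((p + (j : ℕ) - q).toNat) : ℕ) : ℤ) = p + (j : ℕ) by omega] at this
          have := hlforce y hy hagrP ((p - i).toNat)
          rwa [show p - (((p - i).toNat : ℕ) : ℤ) = i by omega] at this
      have hipp : IsIsolatedPeriodicPt X (x : ℤ → A) :=
        isolated_periodic hX x.2 hn q d hd hper hforce'
      rw [hfix₁ x hipp, hfix₂ x hipp]
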